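/- Fix a positive integer k. Let p be a prime, H a positive integer, N₀ ∈ [0,p], and suppose the numbers T(A) (for nonempty A ⊆ {1, …, H}) satisfy T(A) = p (N₀/p)^{|A|} + O(D^{2|A|} √p (log p)^{|A|}) for a parameter D ≥ 2. Define S_r and M_k as in the moment computation: S_0 = p, S_r = Σ_{t=1}^r S(r,t) t! Σ_{|A|=t} T(A), M_k = Σ_{r=0}^k C(k,r)(-HN₀/p)^{k-r} S_r. Then M_k = p μ_k(H, N₀/p) + O_k(D^{2k} H^k √p (log p)^k). -/

import Mathlib

/-- Stirling numbers of the second kind: `stirling2 r t` is the number of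
partitions of an `r`-element set into exactly `t` nonempty subsets. -/
def stirling2 : ℕ → ℕ → ℕ
  | 0, 0 => 1
  | 0, _ + 1 => 0
  | _ + 1, 0 => 0
  | n + 1, k + 1 => (k + 1) * stirling2 n (k + 1) + stirling2 n k

lemma stirling2_zero_right : ∀ n, stirling2 (n+1) 0 = 0 := fun _ => rfl

lemma stirling2_eq_zero : ∀ {r t : ℕ}, r < t → stirling2 r t = 0 := by
  intro r
  induction r with
  | zero => intro t ht; match t, ht with | t+1, _ => rfl
  | succ n ih =>
    intro t ht
    match t, ht with
    | t+1, ht =>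
      have h1 : n < t + 1 := by omega
      have h2 : n < t := by omega
      simp [stirling2, ih h1, ih h2]

lemma pow_eq_sum_stirling2 (h r : ℕ) :
    h ^ r = ∑ t ∈ Finset.range (r+1), stirling2 r t * h.descFactorial t := by
  induction r with
  | zero => simp [stirling2]
  | succ n ih =>
    have key : ∀ t, h * (stirling2 n t * h.descFactorial t)
        = stirling2 n t * h.descFactorial (t+1) + stirling2 n t * (t * h.descFactorial t) := by
      intro t
      rcases le_or_gt t h with hth | hth
      · have : h * h.descFactorial t = h.descFactorial (t+1) + t * h.descFactorial t := by
          rw [Nat.descFactorial_succ]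
          have : (h - t) + t = h := by omega
          nlinarith [Nat.descFactorial_succ h t]
        calc h * (stirling2 n t * h.descFactorial t)
            = stirling2 n t * (h * h.descFactorial t) := by ring
          _ = stirling2 n t * (h.descFactorial (t+1) + t * h.descFactorial t) := by rw [this]
          _ = stirling2 n t * h.descFactorial (t+1) + stirling2 n t * (t * h.descFactorial t) := by ring
      · have h0 : h.descFactorial t = 0 := Nat.descFactorial_eq_zero_iff_lt.2 hth
        have h1 : h.descFactorial (t+1) = 0 := Nat.descFactorial_eq_zero_iff_lt.2 (by omega)
        simp [h0, h1]
    have : h ^ (n+1) = h * h ^ n := by ring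
    rw [this, ih, Finset.mul_sum]
    simp only [key]
    rw [Finset.sum_add_distrib]
    have e1 : ∑ t ∈ Finset.range (n+1), stirling2 n t * h.descFactorial (t+1)
        = ∑ t ∈ Finset.range (n+1), stirling2 n t * h.descFactorial (t+1) := rfl
    -- target sum: ∑ t ∈ range (n+2), stirling2 (n+1) t * descFactorial h t
    rw [Finset.sum_range_succ' (fun t => stirling2 (n+1) t * h.descFactorial t) (n+1)]
    have e0 : stirling2 (n+1) 0 * h.descFactorial 0 = 0 := by simp [stirling2]
    rw [e0, add_zero]
    have : ∀ t, stirling2 (n+1) (t+1) * h.descFactorial (t+1)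
        = stirling2 n t * h.descFactorial (t+1) + (t+1) * stirling2 n (t+1) * h.descFactorial (t+1) := by
      intro t; simp [stirling2]; ring
    simp only [this]
    rw [Finset.sum_add_distrib]
    congr 1
    -- ∑ t ∈ range (n+1), (t+1) * stirling2 n (t+1) * descFactorial h (t+1)
    --   = ∑ t ∈ range (n+1), stirling2 n t * (t * descFactorial h t)
    rw [Finset.sum_range_succ' (fun t => stirling2 n t * (t * h.descFactorial t)) n]
    simp only [Nat.zero_eq, Nat.mul_zero, Nat.zero_mul, mul_zero, zero_mul, add_zero]
    rw [Finset.sum_range_succ]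
    have : stirling2 n (n+1) = 0 := stirling2_eq_zero (by omega)
    simp [this]
    apply Finset.sum_congr rfl
    intro t _; ring

open Finset in
lemma binom_choose_sum (P : ℝ) (H t : ℕ) :
    ∑ h ∈ range (H+1), (H.choose h : ℝ) * P^h * (1-P)^(H-h) * (h.choose t : ℝ)
      = (H.choose t : ℝ) * P^t := by
  rcases le_or_gt t H with htH | htH
  · have hsplit : ∑ h ∈ range (H+1), (H.choose h : ℝ) * P^h * (1-P)^(H-h) * (h.choose t : ℝ)
        = ∑ h ∈ Ico t (H+1), (H.choose h : ℝ) * P^h * (1-P)^(H-h) * (h.choose t : ℝ) := by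
      rw [range_eq_Ico, ← Finset.sum_Ico_consecutive _ (Nat.zero_le t) (by omega)]
      have : ∑ h ∈ Ico 0 t, (H.choose h : ℝ) * P^h * (1-P)^(H-h) * (h.choose t : ℝ) = 0 := by
        apply Finset.sum_eq_zero
        intro h hh
        simp only [mem_Ico] at hh
        rw [Nat.choose_eq_zero_of_lt hh.2]
        simp
      rw [this, zero_add]
    rw [hsplit, Finset.sum_Ico_eq_sum_range]
    have hHT : H + 1 - t = (H - t) + 1 := by omega
    rw [hHT]
    have key : ∀ j ∈ range ((H-t)+1),
        (H.choose (t+j) : ℝ) * P^(t+j) * (1-P)^(H-(t+j)) * ((t+j).choose t : ℝ)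
        = ((H.choose t : ℝ) * P^t) * (((H-t).choose j : ℝ) * P^j * (1-P)^((H-t)-j)) := by
      intro j hj
      simp only [mem_range] at hj
      have hj' : j ≤ H - t := by omega
      have h1 : H.choose (t+j) * (t+j).choose t = H.choose t * (H-t).choose j := by
        have := Nat.choose_mul (n := H) (show t ≤ t + j by omega)
        simpa using this
      have h2 : H - (t+j) = (H-t) - j := by omega
      have h3 : (H.choose (t+j) : ℝ) * ((t+j).choose t : ℝ) = (H.choose t : ℝ) * ((H-t).choose j : ℝ) := by
        exact_mod_cast congrArg (Nat.cast : ℕ → ℝ) h1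
      rw [h2, pow_add]
      linear_combination (P^t * P^j * (1-P)^((H-t)-j)) * h3
    rw [Finset.sum_congr rfl key, ← Finset.mul_sum]
    have hbin : ∑ j ∈ range ((H-t)+1), ((H-t).choose j : ℝ) * P^j * (1-P)^((H-t)-j) = 1 := by
      have hbp := add_pow P (1-P) (H-t)
      rw [show P + (1-P) = 1 by ring, one_pow] at hbp
      have heq : ∑ j ∈ range ((H-t)+1), ((H-t).choose j:ℝ) * P^j * (1-P)^((H-t)-j)
          = ∑ m ∈ range ((H-t)+1), P^m * (1-P)^((H-t)-m) * ((H-t).choose m:ℝ) := by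
        apply Finset.sum_congr rfl; intro j _; ring
      rw [heq, ← hbp]
    rw [hbin, mul_one]
  · rw [Nat.choose_eq_zero_of_lt htH]
    simp only [Nat.cast_zero, zero_mul]
    apply Finset.sum_eq_zero
    intro h hh
    simp only [Finset.mem_range] at hh
    have hz : h.choose t = 0 := Nat.choose_eq_zero_of_lt (by omega)
    rw [hz]
    simp

open Finset in
lemma binom_moment (P : ℝ) (H r : ℕ) :
    ∑ h ∈ range (H+1), (H.choose h : ℝ) * P^h * (1-P)^(H-h) * (h:ℝ)^r
      = ∑ t ∈ range (r+1), (stirling2 r t : ℝ) * (t.factorial : ℝ) * (H.choose t : ℝ) * P^t := by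
  have key : ∀ h : ℕ, ((h:ℝ))^r = ∑ t ∈ range (r+1), (stirling2 r t : ℝ) * (t.factorial : ℝ) * (h.choose t : ℝ) := by
    intro h
    have := pow_eq_sum_stirling2 h r
    have hc : ((h ^ r : ℕ) : ℝ) = ((∑ t ∈ range (r+1), stirling2 r t * h.descFactorial t : ℕ) : ℝ) := by
      exact_mod_cast congrArg (Nat.cast : ℕ → ℝ) this
    push_cast at hc
    rw [hc]
    apply Finset.sum_congr rfl
    intro t _
    rw [Nat.descFactorial_eq_factorial_mul_choose]
    push_cast
    ring
  calc ∑ h ∈ range (H+1), (H.choose h : ℝ) * P^h * (1-P)^(H-h) * (h:ℝ)^r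
      = ∑ h ∈ range (H+1), ∑ t ∈ range (r+1),
          (stirling2 r t : ℝ) * (t.factorial : ℝ) *
            ((H.choose h : ℝ) * P^h * (1-P)^(H-h) * (h.choose t : ℝ)) := by
        apply Finset.sum_congr rfl
        intro h _
        rw [key h, Finset.mul_sum]
        apply Finset.sum_congr rfl
        intro t _; ring
    _ = ∑ t ∈ range (r+1), (stirling2 r t : ℝ) * (t.factorial : ℝ) *
          ∑ h ∈ range (H+1), (H.choose h : ℝ) * P^h * (1-P)^(H-h) * (h.choose t : ℝ) := by
        rw [Finset.sum_comm]
        apply Finset.sum_congr rfl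
        intro t _
        rw [Finset.mul_sum]
    _ = ∑ t ∈ range (r+1), (stirling2 r t : ℝ) * (t.factorial : ℝ) * (H.choose t : ℝ) * P^t := by
        apply Finset.sum_congr rfl
        intro t _
        rw [binom_choose_sum]
        ring

open Finset in
lemma main_identity (P : ℝ) (H k : ℕ) :
    ∑ r ∈ range (k+1), (k.choose r : ℝ) * (-((H:ℝ) * P)) ^ (k-r) *
        (∑ t ∈ range (r+1), (stirling2 r t : ℝ) * (t.factorial : ℝ) * (H.choose t : ℝ) * P^t)
      = ∑ h ∈ range (H+1), (H.choose h : ℝ) * P^h * (1-P)^(H-h) * ((h:ℝ) - H*P)^k := by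
  have expand : ∀ h : ℕ, ((h:ℝ) - H*P)^k
      = ∑ r ∈ range (k+1), (h:ℝ)^r * (-((H:ℝ)*P))^(k-r) * (k.choose r : ℝ) := by
    intro h
    have := add_pow (h:ℝ) (-((H:ℝ)*P)) k
    rw [show (h:ℝ) + -((H:ℝ)*P) = (h:ℝ) - H*P by ring] at this
    exact this
  calc ∑ r ∈ range (k+1), (k.choose r : ℝ) * (-((H:ℝ) * P)) ^ (k-r) *
        (∑ t ∈ range (r+1), (stirling2 r t : ℝ) * (t.factorial : ℝ) * (H.choose t : ℝ) * P^t)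
      = ∑ r ∈ range (k+1), (k.choose r : ℝ) * (-((H:ℝ) * P)) ^ (k-r) *
          (∑ h ∈ range (H+1), (H.choose h : ℝ) * P^h * (1-P)^(H-h) * (h:ℝ)^r) := by
        apply Finset.sum_congr rfl
        intro r _
        rw [binom_moment]
    _ = ∑ h ∈ range (H+1), (H.choose h : ℝ) * P^h * (1-P)^(H-h) *
          (∑ r ∈ range (k+1), (h:ℝ)^r * (-((H:ℝ)*P))^(k-r) * (k.choose r : ℝ)) := by
        simp only [Finset.mul_sum]
        rw [Finset.sum_comm]
        apply Finset.sum_congr rfl; intro h _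
        apply Finset.sum_congr rfl; intro r _
        ring
    _ = ∑ h ∈ range (H+1), (H.choose h : ℝ) * P^h * (1-P)^(H-h) * ((h:ℝ) - H*P)^k := by
        apply Finset.sum_congr rfl
        intro h _
        rw [expand]

open Finset in

/-- Quantitative form of Theorem 1.2: if the pattern counts obey a Weil-type
estimate `T(A) = p(N₀/p)^{|A|} + O(D^{2|A|}√p (log p)^{|A|})`, then
`M_k = p μ_k(H, N₀/p) + O_k(D^{2k} H^k √p (log p)^k)`. -/
theorem moments_weil (k : ℕ) (hk : 0 < k) :
    ∃ C : ℝ, 0 < C ∧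
      ∀ (p H : ℕ) (N₀ D c₀ : ℝ) (T : Finset ℕ → ℝ),
        p.Prime → 0 < H → 0 ≤ N₀ → N₀ ≤ p → 2 ≤ D → 0 ≤ c₀ →
        (∀ A ⊆ Finset.Icc 1 H, A.Nonempty →
          |T A - p * (N₀ / p) ^ A.card|
            ≤ c₀ * D ^ (2 * A.card) * Real.sqrt p * Real.log p ^ A.card) →
        |(∑ r ∈ Finset.range (k + 1), (k.choose r : ℝ) * (-(H * N₀ / p)) ^ (k - r) *
            (if r = 0 then (p : ℝ)
              else ∑ t ∈ Finset.Icc 1 r, (stirling2 r t : ℝ) * (t.factorial : ℝ) *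
                ∑ A ∈ (Finset.Icc 1 H).powersetCard t, T A))
          - p * (∑ h ∈ Finset.range (H + 1),
              (H.choose h : ℝ) * (N₀ / p) ^ h * (1 - N₀ / p) ^ (H - h)
                * ((h : ℝ) - H * (N₀ / p)) ^ k)|
          ≤ C * c₀ * D ^ (2 * k) * (H : ℝ) ^ k * Real.sqrt p * Real.log p ^ k := by
  classical
  set Cnat : ℕ := ∑ r ∈ Icc 1 k, k.choose r * ∑ t ∈ Icc 1 r, stirling2 r t with hCnat
  set B : ℝ := (Real.log 2)⁻¹ with hB
  have hlog2pos : 0 < Real.log 2 := Real.log_pos (by norm_num)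
  have hBpos : 0 < B := inv_pos.2 hlog2pos
  have hB1 : 1 ≤ B := (one_le_inv₀ hlog2pos).2 (by
    have := Real.log_two_lt_d9; linarith)
  refine ⟨((Cnat : ℝ) + 1) * B ^ k, by positivity, ?_⟩
  intro p H N₀ D c₀ T hp hH hN₀ hN₀p hD hc₀ hT
  have hppos : (0:ℝ) < p := by exact_mod_cast hp.pos
  have hp2 : (2:ℝ) ≤ p := by exact_mod_cast hp.two_le
  set L : ℝ := Real.log p with hLdef
  set sq : ℝ := Real.sqrt p with hsqdef
  have hL2 : Real.log 2 ≤ L := Real.log_le_log (by norm_num) hp2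
  have hLpos : 0 < L := lt_of_lt_of_le hlog2pos hL2
  have hsq0 : 0 ≤ sq := Real.sqrt_nonneg _
  set P : ℝ := N₀ / p with hPdef
  have hP0 : 0 ≤ P := div_nonneg hN₀ hppos.le
  have hP1 : P ≤ 1 := (div_le_one hppos).2 hN₀p
  have hH1 : (1:ℝ) ≤ (H:ℝ) := by exact_mod_cast hH
  have hD1 : (1:ℝ) ≤ D := by linarith
  set U : ℝ := c₀ * D ^ (2*k) * sq * (B ^ k * L ^ k) with hU
  have hU0 : 0 ≤ U := by positivity
  set Mu : ℝ := ∑ h ∈ range (H + 1),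
      (H.choose h : ℝ) * P ^ h * (1 - P) ^ (H - h) * ((h : ℝ) - H * P) ^ k with hMu
  set m : ℕ → ℝ := fun r =>
    ∑ t ∈ range (r+1), (stirling2 r t : ℝ) * (t.factorial : ℝ) * (H.choose t : ℝ) * P ^ t
    with hm
  set SI : ℕ → ℝ := fun r => if r = 0 then (p : ℝ)
      else ∑ t ∈ Icc 1 r, (stirling2 r t : ℝ) * (t.factorial : ℝ) *
        ∑ A ∈ (Icc 1 H).powersetCard t, T A with hSI
  set g : ℕ → ℝ := fun r => (k.choose r : ℝ) * (-((H:ℝ) * N₀ / p)) ^ (k - r) with hg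
  -- the L^t ≤ B^k L^k bound
  have hLt : ∀ t ≤ k, L ^ t ≤ B ^ k * L ^ k := by
    intro t ht
    have h1 : L ^ t * Real.log 2 ^ (k - t) ≤ L ^ t * L ^ (k - t) := by
      apply mul_le_mul_of_nonneg_left (pow_le_pow_left₀ hlog2pos.le hL2 _) (by positivity)
    have h2 : L ^ t * L ^ (k - t) = L ^ k := by
      rw [← pow_add]; congr 1; omega
    have h3 : L ^ t ≤ L ^ k * (Real.log 2 ^ (k - t))⁻¹ := by
      rw [← div_eq_mul_inv, le_div_iff₀ (by positivity)]
      linarith [h1, h2.le]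
    have h4 : (Real.log 2 ^ (k - t))⁻¹ = B ^ (k - t) := by
      rw [hB, inv_pow]
    have h5 : B ^ (k - t) ≤ B ^ k := pow_le_pow_right₀ hB1 (by omega)
    calc L ^ t ≤ L ^ k * B ^ (k - t) := by rw [← h4]; exact h3
      _ ≤ L ^ k * B ^ k := mul_le_mul_of_nonneg_left h5 (by positivity)
      _ = B ^ k * L ^ k := by ring
  -- key per-r estimate
  have key : ∀ r ∈ Icc 1 k, |SI r - (p:ℝ) * m r|
      ≤ (∑ t ∈ Icc 1 r, (stirling2 r t : ℝ)) * ((H:ℝ) ^ r * U) := by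
    intro r hr
    simp only [mem_Icc] at hr
    have hr1 : r ≠ 0 := by omega
    have hSIr : SI r = ∑ t ∈ Icc 1 r, (stirling2 r t : ℝ) * (t.factorial : ℝ) *
        ∑ A ∈ (Icc 1 H).powersetCard t, T A := by
      simp only [hSI]
      rw [if_neg hr1]
    have hpm : (p:ℝ) * m r = ∑ t ∈ Icc 1 r, (stirling2 r t : ℝ) * (t.factorial : ℝ) *
        ∑ A ∈ (Icc 1 H).powersetCard t, (p:ℝ) * P ^ t := by
      have hmr : m r = ∑ t ∈ Icc 1 r,
          (stirling2 r t : ℝ) * (t.factorial : ℝ) * (H.choose t : ℝ) * P ^ t := by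
        simp only [hm]
        rw [range_eq_Ico, ← Finset.sum_Ico_consecutive _ (Nat.zero_le 1) (by omega : 1 ≤ r + 1)]
        have h0 : ∑ t ∈ Ico 0 1, (stirling2 r t : ℝ) * (t.factorial : ℝ) * (H.choose t : ℝ) * P ^ t = 0 := by
          rw [show Ico 0 1 = {0} from rfl, Finset.sum_singleton]
          have : stirling2 r 0 = 0 := by
            cases r with
            | zero => omega
            | succ n => rfl
          simp [this]
        rw [h0, zero_add, Finset.Ico_add_one_right_eq_Icc]
      rw [hmr, Finset.mul_sum]
      apply Finset.sum_congr rfl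
      intro t _
      have hcard : ∑ A ∈ (Icc 1 H).powersetCard t, (p:ℝ) * P ^ t
          = (H.choose t : ℝ) * ((p:ℝ) * P ^ t) := by
        rw [Finset.sum_const, Finset.card_powersetCard, Nat.card_Icc]
        simp [nsmul_eq_mul]
      rw [hcard]; ring
    have hdiff : SI r - (p:ℝ) * m r = ∑ t ∈ Icc 1 r, (stirling2 r t : ℝ) * (t.factorial : ℝ) *
        ∑ A ∈ (Icc 1 H).powersetCard t, (T A - (p:ℝ) * P ^ t) := by
      rw [hSIr, hpm, ← Finset.sum_sub_distrib]
      apply Finset.sum_congr rfl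
      intro t _
      rw [← mul_sub, ← Finset.sum_sub_distrib]
    have habs : ∀ t ∈ Icc 1 r, |∑ A ∈ (Icc 1 H).powersetCard t, (T A - (p:ℝ) * P ^ t)|
        ≤ (H.choose t : ℝ) * (c₀ * D ^ (2*t) * sq * L ^ t) := by
      intro t ht
      simp only [mem_Icc] at ht
      have h1 : |∑ A ∈ (Icc 1 H).powersetCard t, (T A - (p:ℝ) * P ^ t)|
          ≤ ∑ A ∈ (Icc 1 H).powersetCard t, |T A - (p:ℝ) * P ^ t| :=
        Finset.abs_sum_le_sum_abs _ _
      have h2 : ∑ A ∈ (Icc 1 H).powersetCard t, |T A - (p:ℝ) * P ^ t|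
          ≤ ∑ A ∈ (Icc 1 H).powersetCard t, (c₀ * D ^ (2*t) * sq * L ^ t) := by
        apply Finset.sum_le_sum
        intro A hA
        rw [Finset.mem_powersetCard] at hA
        have hAne : A.Nonempty := by
          rw [← Finset.card_pos, hA.2]; omega
        have hTA := hT A hA.1 hAne
        rw [hA.2] at hTA
        exact hTA
      have h3 : ∑ A ∈ (Icc 1 H).powersetCard t, (c₀ * D ^ (2*t) * sq * L ^ t)
          = (H.choose t : ℝ) * (c₀ * D ^ (2*t) * sq * L ^ t) := by
        rw [Finset.sum_const, Finset.card_powersetCard, Nat.card_Icc]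
        simp [nsmul_eq_mul]
      linarith
    have hfac : ∀ t ∈ Icc 1 r, (t.factorial : ℝ) * ((H.choose t : ℝ) * (c₀ * D ^ (2*t) * sq * L ^ t))
        ≤ (H:ℝ) ^ r * U := by
      intro t ht
      simp only [mem_Icc] at ht
      have hd1 : ((t.factorial * H.choose t : ℕ) : ℝ) ≤ (H:ℝ) ^ r := by
        have e1 : t.factorial * H.choose t = H.descFactorial t :=
          (Nat.descFactorial_eq_factorial_mul_choose H t).symm
        have e2 : H.descFactorial t ≤ H ^ t := Nat.descFactorial_le_pow H t
        have e3 : (H:ℝ) ^ t ≤ (H:ℝ) ^ r := pow_le_pow_right₀ hH1 ht.2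
        calc ((t.factorial * H.choose t : ℕ) : ℝ) = ((H.descFactorial t : ℕ) : ℝ) := by rw [e1]
          _ ≤ (H:ℝ) ^ t := by exact_mod_cast e2
          _ ≤ (H:ℝ) ^ r := e3
      have hd2 : D ^ (2*t) ≤ D ^ (2*k) := pow_le_pow_right₀ hD1 (by omega)
      have hd3 : L ^ t ≤ B ^ k * L ^ k := hLt t (by omega)
      have step1 : c₀ * D ^ (2*t) * sq * L ^ t ≤ c₀ * D ^ (2*k) * sq * (B ^ k * L ^ k) := by
        apply mul_le_mul _ hd3 (by positivity) (by positivity)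
        apply mul_le_mul _ le_rfl hsq0 (by positivity)
        exact mul_le_mul_of_nonneg_left hd2 hc₀
      have step2 : (t.factorial : ℝ) * ((H.choose t : ℝ) * (c₀ * D ^ (2*t) * sq * L ^ t))
          = ((t.factorial * H.choose t : ℕ) : ℝ) * (c₀ * D ^ (2*t) * sq * L ^ t) := by
        push_cast; ring
      rw [step2, hU]
      exact mul_le_mul hd1 step1 (by positivity) (by positivity)
    have pert : ∀ t ∈ Icc 1 r, |(stirling2 r t : ℝ) * (t.factorial : ℝ) *
        ∑ A ∈ (Icc 1 H).powersetCard t, (T A - (p:ℝ) * P ^ t)|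
        ≤ (stirling2 r t : ℝ) * ((H:ℝ) ^ r * U) := by
      intro t ht
      rw [abs_mul, abs_mul]
      have hs1 : |(stirling2 r t : ℝ)| = (stirling2 r t : ℝ) := abs_of_nonneg (by positivity)
      have hs2 : |(t.factorial : ℝ)| = (t.factorial : ℝ) := abs_of_nonneg (by positivity)
      rw [hs1, hs2, mul_assoc]
      apply mul_le_mul_of_nonneg_left _ (by positivity)
      have hb1 := habs t ht
      have hb2 := hfac t ht
      calc (t.factorial : ℝ) * |∑ A ∈ (Icc 1 H).powersetCard t, (T A - (p:ℝ) * P ^ t)|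
          ≤ (t.factorial : ℝ) * ((H.choose t : ℝ) * (c₀ * D ^ (2*t) * sq * L ^ t)) :=
            mul_le_mul_of_nonneg_left hb1 (by positivity)
        _ ≤ (H:ℝ) ^ r * U := hb2
    rw [hdiff]
    have hstep : |∑ t ∈ Icc 1 r, (stirling2 r t : ℝ) * (t.factorial : ℝ) *
        ∑ A ∈ (Icc 1 H).powersetCard t, (T A - (p:ℝ) * P ^ t)|
        ≤ ∑ t ∈ Icc 1 r, (stirling2 r t : ℝ) * ((H:ℝ) ^ r * U) :=
      (Finset.abs_sum_le_sum_abs _ _).trans (Finset.sum_le_sum pert)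
    rw [Finset.sum_mul]
    exact hstep
  -- identity for the main term
  have hμ : (p:ℝ) * Mu = ∑ r ∈ range (k+1), g r * ((p:ℝ) * m r) := by
    rw [hMu, ← main_identity P H k, Finset.mul_sum]
    apply Finset.sum_congr rfl
    intro r _
    simp only [hg, hm]
    rw [show -((H:ℝ) * N₀ / p) = -((H:ℝ) * P) by rw [hPdef]; ring]
    ring
  have hLHS : (∑ r ∈ range (k + 1), (k.choose r : ℝ) * (-((H:ℝ) * N₀ / p)) ^ (k - r) *
      (if r = 0 then (p : ℝ)
        else ∑ t ∈ Icc 1 r, (stirling2 r t : ℝ) * (t.factorial : ℝ) *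
          ∑ A ∈ (Icc 1 H).powersetCard t, T A))
      = ∑ r ∈ range (k+1), g r * SI r := rfl
  rw [hLHS]
  have hsum : (∑ r ∈ range (k+1), g r * SI r) - (p:ℝ) * Mu
      = ∑ r ∈ Icc 1 k, g r * (SI r - (p:ℝ) * m r) := by
    rw [hμ, ← Finset.sum_sub_distrib]
    have hterm : ∀ r, g r * SI r - g r * ((p:ℝ) * m r) = g r * (SI r - (p:ℝ) * m r) :=
      fun r => by ring
    simp only [hterm]
    rw [range_eq_Ico, ← Finset.sum_Ico_consecutive _ (Nat.zero_le 1) (by omega : 1 ≤ k + 1)]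
    have h0 : ∑ r ∈ Ico 0 1, g r * (SI r - (p:ℝ) * m r) = 0 := by
      rw [show Ico 0 1 = {0} from rfl, Finset.sum_singleton]
      have hm0 : m 0 = 1 := by simp [hm, stirling2]
      have hSI0 : SI 0 = (p:ℝ) := by simp [hSI]
      rw [hm0, hSI0]
      ring
    rw [h0, zero_add, Finset.Ico_add_one_right_eq_Icc]
  rw [hsum]
  have hgb : ∀ r ∈ Icc 1 k, |g r| ≤ (k.choose r : ℝ) * (H:ℝ) ^ (k - r) := by
    intro r hr
    simp only [hg, abs_mul, abs_pow, abs_neg]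
    have h1 : |(k.choose r : ℝ)| = (k.choose r : ℝ) := abs_of_nonneg (by positivity)
    have h2 : |(H:ℝ) * N₀ / p| = (H:ℝ) * N₀ / p := abs_of_nonneg (by positivity)
    rw [h1, h2]
    apply mul_le_mul_of_nonneg_left _ (by positivity)
    apply pow_le_pow_left₀ (by positivity)
    calc (H:ℝ) * N₀ / p = (H:ℝ) * P := by rw [hPdef]; ring
      _ ≤ (H:ℝ) * 1 := mul_le_mul_of_nonneg_left hP1 (by positivity)
      _ = (H:ℝ) := mul_one _
  calc |∑ r ∈ Icc 1 k, g r * (SI r - (p:ℝ) * m r)|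
      ≤ ∑ r ∈ Icc 1 k, |g r * (SI r - (p:ℝ) * m r)| := Finset.abs_sum_le_sum_abs _ _
    _ ≤ ∑ r ∈ Icc 1 k, ((k.choose r : ℝ) * (H:ℝ) ^ (k - r)) *
          ((∑ t ∈ Icc 1 r, (stirling2 r t : ℝ)) * ((H:ℝ) ^ r * U)) := by
        apply Finset.sum_le_sum
        intro r hr
        rw [abs_mul]
        exact mul_le_mul (hgb r hr) (key r hr) (abs_nonneg _) (by positivity)
    _ = ∑ r ∈ Icc 1 k, ((k.choose r : ℝ) * (∑ t ∈ Icc 1 r, (stirling2 r t : ℝ))) *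
          ((H:ℝ) ^ k * U) := by
        apply Finset.sum_congr rfl
        intro r hr
        simp only [mem_Icc] at hr
        have : (H:ℝ) ^ (k - r) * (H:ℝ) ^ r = (H:ℝ) ^ k := by
          rw [← pow_add]; congr 1; omega
        calc ((k.choose r : ℝ) * (H:ℝ) ^ (k - r)) *
              ((∑ t ∈ Icc 1 r, (stirling2 r t : ℝ)) * ((H:ℝ) ^ r * U))
            = ((k.choose r : ℝ) * (∑ t ∈ Icc 1 r, (stirling2 r t : ℝ))) *
              (((H:ℝ) ^ (k - r) * (H:ℝ) ^ r) * U) := by ring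
          _ = ((k.choose r : ℝ) * (∑ t ∈ Icc 1 r, (stirling2 r t : ℝ))) *
              ((H:ℝ) ^ k * U) := by rw [this]
    _ = (Cnat : ℝ) * ((H:ℝ) ^ k * U) := by
        rw [← Finset.sum_mul]
        congr 1
        rw [hCnat]
        push_cast
        rfl
    _ ≤ ((Cnat : ℝ) + 1) * B ^ k * c₀ * D ^ (2 * k) * (H:ℝ) ^ k * sq * L ^ k := by
        rw [hU]
        have e1 : (Cnat : ℝ) * ((H:ℝ) ^ k * (c₀ * D ^ (2*k) * sq * (B ^ k * L ^ k)))
            = ((Cnat : ℝ) * B ^ k) * (c₀ * D ^ (2*k) * (H:ℝ) ^ k * sq * L ^ k) := by ring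
        have e2 : ((Cnat : ℝ) + 1) * B ^ k * c₀ * D ^ (2 * k) * (H:ℝ) ^ k * sq * L ^ k
            = (((Cnat : ℝ) + 1) * B ^ k) * (c₀ * D ^ (2*k) * (H:ℝ) ^ k * sq * L ^ k) := by ring
        rw [e1, e2]
        apply mul_le_mul_of_nonneg_right _ (by positivity)
        apply mul_le_mul_of_nonneg_right _ (by positivity)
        linarith
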